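/- Let A be a brace of cardinality p^n with p > n + 1 prime, and suppose a, a' ∈ A satisfy p²(a − a') = 0. Then for every y ∈ A, p((pa) * y) = p((pa') * y). -/

import Mathlib

/-- A left brace: an abelian group `(A,+)` together with a group operation `circ`
(whose identity is `0`) satisfying `a ∘ (b + c) + a = a ∘ b + a ∘ c`. -/
structure LeftBrace (A : Type*) [AddCommGroup A] where
  circ : A → A → A
  inv : A → A
  circ_assoc : ∀ a b c, circ (circ a b) c = circ a (circ b c)
  circ_zero : ∀ a, circ a 0 = a
  zero_circ : ∀ a, circ 0 a = a
  inv_circ : ∀ a, circ (inv a) a = 0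
  compat : ∀ a b c, circ a (b + c) + a = circ a b + circ a c

namespace LeftBrace

variable {A : Type*} [AddCommGroup A]

/-- The star operation `a * b = a ∘ b - a - b`. -/
def star (B : LeftBrace A) (a b : A) : A := B.circ a b - a - b

/-- `circPow B a n` is the product `a ∘ a ∘ ⋯ ∘ a` of `n` copies of `a`. -/
def circPow (B : LeftBrace A) (a : A) : ℕ → A
  | 0 => 0
  | n + 1 => B.circ a (B.circPow a n)

end LeftBrace

namespace LeftBrace

variable {A : Type*} [AddCommGroup A] (B : LeftBrace A)

lemma circ_add_right (a u v : A) : B.circ a (u + v) = B.circ a u + B.circ a v - a :=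
  eq_sub_of_add_eq (B.compat a u v)

lemma circ_sub_right (a u v : A) : B.circ a (u - v) = B.circ a u - B.circ a v + a := by
  have h := B.circ_add_right a (u - v) v
  rw [sub_add_cancel] at h
  rw [h]
  abel

lemma star_add_right (a u v : A) : B.star a (u + v) = B.star a u + B.star a v := by
  unfold star
  rw [B.circ_add_right a u v]
  abel

/-- left multiplication as an additive endomorphism -/
def L (a : A) : AddMonoid.End A := AddMonoidHom.mk' (B.star a) (B.star_add_right a)

@[simp] lemma L_apply (a b : A) : B.L a b = B.star a b := rfl

/-- the lambda map -/
def lam (a : A) : AddMonoid.End A := 1 + B.L a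

lemma lam_apply (a b : A) : B.lam a b = B.circ a b - a := by
  show b + B.star a b = B.circ a b - a
  unfold star; abel

lemma lam_apply' (a b : A) : B.lam a b = b + B.star a b := rfl

lemma circ_eq_add_lam (a b : A) : B.circ a b = a + B.lam a b := by
  rw [lam_apply]; abel

@[simp] lemma lam_zero : B.lam 0 = 1 := by
  refine DFunLike.ext _ _ fun b => ?_
  rw [lam_apply, B.zero_circ]
  simp

lemma lam_circ (a b : A) : B.lam (B.circ a b) = B.lam a * B.lam b := by
  refine DFunLike.ext _ _ fun c => ?_
  rw [AddMonoid.End.coe_mul]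
  show B.lam (B.circ a b) c = B.lam a (B.lam b c)
  rw [lam_apply, lam_apply, lam_apply, circ_sub_right, B.circ_assoc]
  abel

lemma lam_circPow (w : A) (k : ℕ) : B.lam (B.circPow w k) = (B.lam w) ^ k := by
  induction k with
  | zero => rw [pow_zero]; exact B.lam_zero
  | succ k ih => rw [circPow, lam_circ, ih, pow_succ']

lemma lam_injective (a : A) : Function.Injective (B.lam a) := by
  intro u v h
  rw [lam_apply, lam_apply] at h
  have h2 : B.circ a u = B.circ a v := by have := congrArg (· + a) h; simpa using this
  calc u = B.circ 0 u := (B.zero_circ u).symm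
    _ = B.circ (B.circ (B.inv a) a) u := by rw [B.inv_circ]
    _ = B.circ (B.inv a) (B.circ a u) := B.circ_assoc _ _ _
    _ = B.circ (B.inv a) (B.circ a v) := by rw [h2]
    _ = B.circ (B.circ (B.inv a) a) v := (B.circ_assoc _ _ _).symm
    _ = B.circ 0 v := by rw [B.inv_circ]
    _ = v := B.zero_circ v

lemma circPow_card [Fintype A] (w : A) : B.circPow w (Fintype.card A) = 0 := by
  letI G : Group A :=
    { mul := B.circ
      one := (0 : A)
      inv := B.inv
      mul_assoc := B.circ_assoc
      one_mul := B.zero_circ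
      mul_one := B.circ_zero
      inv_mul_cancel := B.inv_circ }
  have hpow : ∀ k : ℕ, B.circPow w k = w ^ k := by
    intro k
    induction k with
    | zero => rfl
    | succ k ih => rw [circPow, ih, pow_succ']; rfl
  rw [hpow]
  exact pow_card_eq_one


end LeftBrace

universe u

instance AddAut.mulGroupPort {A : Type u} [AddCommGroup A] : Group (AddAut A) where
  mul g h := AddEquiv.trans h g
  one := AddEquiv.refl _
  inv := AddEquiv.symm
  mul_assoc _ _ _ := rfl
  one_mul _ := rfl
  mul_one _ := rfl
  inv_mul_cancel := AddEquiv.self_trans_symm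

instance AddAut.distribMulActionPort {A : Type u} [AddCommGroup A] :
    DistribMulAction (AddAut A) A where
  smul f a := f a
  one_smul _ := rfl
  mul_smul _ _ _ := rfl
  smul_zero f := map_zero f
  smul_add f := map_add f

@[simp] lemma AddAut.apply_inv_self_port {A : Type u} [AddCommGroup A] (e : AddAut A) (m : A) :
    e (e⁻¹ m) = m := AddEquiv.apply_symm_apply _ _

@[simp] lemma AddAut.inv_apply_self_port {A : Type u} [AddCommGroup A] (e : AddAut A) (m : A) :
    e⁻¹ (e m) = m := AddEquiv.symm_apply_apply _ _


/-- An additive automorphism viewed as an additive monoid endomorphism. -/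
def AddAut.toEnd {A : Type u} [AddCommGroup A] (φ : AddAut A) : AddMonoid.End A :=
  AddEquiv.toAddMonoidHom φ

@[simp] lemma AddAut.toEnd_apply {A : Type u} [AddCommGroup A] (φ : AddAut A) (x : A) :
    φ.toEnd x = φ x := rfl

/-- An additive automorphism of `p`-power order on an abelian group of
cardinality `p ^ n` satisfies `(φ - 1) ^ n = 0`. -/
theorem aux_nilpotent : ∀ (n : ℕ) {A : Type u} [AddCommGroup A] [Fintype A] (p e : ℕ),
    p.Prime → Fintype.card A = p ^ n → ∀ (φ : AddAut A), φ ^ (p ^ e) = 1 →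
    (AddAut.toEnd φ - 1) ^ n = 0 := by
  intro n
  induction n using Nat.strong_induction_on with
  | _ n ih =>
  intro A _ _ p e hp hcard φ hφ
  set N : AddMonoid.End A := AddAut.toEnd φ - 1 with hN
  have hNapp : ∀ x : A, N x = φ x - x := fun x => rfl
  match n, hcard, ih with
  | 0, hcard, ih =>
    have : Fintype.card A = 1 := by simpa using hcard
    haveI : Subsingleton A := Fintype.card_le_one_iff_subsingleton.mp this.le
    refine DFunLike.ext _ _ fun x => Subsingleton.elim _ _
  | (n + 1), hcard, ih =>
    haveI : Fact p.Prime := ⟨hp⟩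
    set G := Subgroup.zpowers φ with hG
    have hpG : IsPGroup p G := by
      intro g
      refine ⟨e, ?_⟩
      obtain ⟨k, hk⟩ := Subgroup.mem_zpowers_iff.mp g.2
      ext
      push_cast
      rw [← hk, ← zpow_natCast (φ ^ k), ← zpow_mul, mul_comm, zpow_mul, zpow_natCast, hφ,
        one_zpow]
    -- a nonzero fixed point
    have h0 : (0 : A) ∈ MulAction.fixedPoints G A := by
      intro g
      show (g : AddAut A) • (0 : A) = 0
      simp
    have hpdvd : p ∣ Nat.card A := by
      rw [Nat.card_eq_fintype_card, hcard]
      exact dvd_pow_self p (Nat.succ_ne_zero n)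
    obtain ⟨b, hb, hb0⟩ := hpG.exists_fixed_point_of_prime_dvd_card_of_fixed_point (α := A) hpdvd h0
    have hφb : φ b = b := by
      have := hb ⟨φ, Subgroup.mem_zpowers φ⟩
      rwa [show (⟨φ, Subgroup.mem_zpowers φ⟩ : G) • b = φ b from rfl] at this
    have hbker : b ∈ N.ker := by
      show N b = 0
      rw [hNapp, hφb, sub_self]
    -- the range of N
    set R := N.range with hR
    have hcardlt : Nat.card R < Nat.card A := by
      have h1 : Nat.card A = Nat.card (A ⧸ N.ker) * Nat.card N.ker :=
        AddSubgroup.card_eq_card_quotient_mul_card_addSubgroup _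
      have h2 : Nat.card R = Nat.card (A ⧸ N.ker) :=
        (Nat.card_congr (QuotientAddGroup.quotientKerEquivRange N).toEquiv).symm
      have hker2 : 2 ≤ Nat.card N.ker := by
        haveI : Nontrivial N.ker :=
          nontrivial_of_ne ⟨b, hbker⟩ ⟨0, N.ker.zero_mem⟩
            (by simp [Subtype.ext_iff, hb0.symm])
        exact Finite.one_lt_card
      have hpos : 0 < Nat.card (A ⧸ N.ker) := Nat.card_pos
      rw [h2, h1]
      calc Nat.card (A ⧸ N.ker) < Nat.card (A ⧸ N.ker) * 2 := by omega
        _ ≤ Nat.card (A ⧸ N.ker) * Nat.card N.ker := by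
            exact Nat.mul_le_mul_left _ hker2
    have hdvd : Nat.card R ∣ Nat.card A := AddSubgroup.card_addSubgroup_dvd_card R
    rw [Nat.card_eq_fintype_card (α := A), hcard] at hdvd hcardlt
    obtain ⟨m, hmn, hm⟩ := (Nat.dvd_prime_pow hp).mp hdvd
    have hmlt : m < n + 1 := by
      rw [hm] at hcardlt
      exact (Nat.pow_lt_pow_iff_right hp.one_lt).mp hcardlt
    -- restrict φ to R
    have hmem : ∀ x ∈ R, φ x ∈ R := by
      rintro x ⟨a, rfl⟩
      exact ⟨φ a, by show φ (φ a) - φ a = φ (φ a - a); rw [map_sub]⟩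
    have hmem' : ∀ x ∈ R, φ⁻¹ x ∈ R := by
      rintro x ⟨a, rfl⟩
      refine ⟨φ⁻¹ a, ?_⟩
      show φ (φ⁻¹ a) - φ⁻¹ a = φ⁻¹ (φ a - a)
      rw [map_sub]
      simp [AddAut.apply_inv_self_port]
    set ψ : AddAut R :=
      { toFun := fun x => ⟨φ x, hmem x x.2⟩
        invFun := fun x => ⟨φ⁻¹ x, hmem' x x.2⟩
        left_inv := fun x => by ext; simp [AddAut.apply_inv_self_port]
        right_inv := fun x => by ext; simp [AddAut.inv_apply_self_port]
        map_add' := fun x y => by ext; simp [map_add] } with hψ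
    have hψcoe : ∀ (k : ℕ) (x : R), ((ψ ^ k) x : A) = (φ ^ k) (x : A) := by
      intro k
      induction k with
      | zero => intro x; rfl
      | succ k ihk =>
        intro x
        rw [pow_succ, pow_succ]
        show ((ψ ^ k) (ψ x) : A) = (φ ^ k) (φ (x : A))
        rw [ihk (ψ x)]
        rfl
    have hψord : ψ ^ (p ^ e) = 1 := by
      refine AddEquiv.ext fun x => ?_
      refine Subtype.ext ?_
      rw [hψcoe, hφ]
      rfl
    haveI : Fintype R := Fintype.ofFinite _
    have hcardR : Fintype.card R = p ^ m := by
      rw [← Nat.card_eq_fintype_card, hm]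
    have hMB := ih m hmlt p e hp hcardR ψ hψord
    set MB : AddMonoid.End R := AddAut.toEnd ψ - 1 with hMBdef
    have hMBcoe : ∀ (k : ℕ) (x : R), ((MB ^ k) x : A) = (N ^ k) (x : A) := by
      intro k
      induction k with
      | zero => intro x; rfl
      | succ k ihk =>
        intro x
        have hco : ∀ y : R, (MB y : A) = N (y : A) := by
          intro y
          show (ψ y : A) - (y : A) = N (y : A)
          rw [hNapp]
          rfl
        rw [pow_succ, pow_succ]
        show ((MB ^ k) (MB x) : A) = (N ^ k) (N (x : A))
        rw [ihk (MB x), hco x]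
    have hNm : ∀ x : A, ∀ hx : x ∈ R, (N ^ m) x = 0 := by
      intro x hx
      have := hMBcoe m ⟨x, hx⟩
      rw [hMB] at this
      simpa using this.symm
    refine DFunLike.ext _ _ fun x => ?_
    have hsplit : (n + 1 : ℕ) = (n - m) + (m + 1) := by omega
    rw [hsplit, pow_add, AddMonoid.End.coe_mul, Function.comp_apply]
    show (N ^ (n - m)) ((N ^ (m + 1)) x) = (0 : AddMonoid.End A) x
    rw [pow_succ, AddMonoid.End.coe_mul, Function.comp_apply]
    rw [hNm (N x) ⟨x, rfl⟩]
    simp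

namespace LeftBrace

variable {A : Type*} [AddCommGroup A] (B : LeftBrace A)

lemma circPow_eq_sum (t : A) (k : ℕ) :
    B.circPow t k = ∑ m ∈ Finset.range k, (k.choose (m + 1)) • ((B.L t ^ m) t) := by
  induction k with
  | zero => simp [circPow]
  | succ k ih =>
    have hstep : B.circPow t (k + 1) = t + B.circPow t k + (B.L t) (B.circPow t k) := by
      rw [circPow, circ_eq_add_lam]
      show t + (B.circPow t k + B.star t (B.circPow t k)) = _
      rw [← B.L_apply t]
      abel
    rw [hstep, ih, map_sum]
    have hmap : ∀ m, (B.L t) ((k.choose (m+1)) • ((B.L t ^ m) t))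
        = (k.choose (m+1)) • ((B.L t ^ (m+1)) t) := by
      intro m
      rw [map_nsmul]
      congr 1
      rw [pow_succ', AddMonoid.End.coe_mul, Function.comp_apply]
    rw [Finset.sum_congr rfl fun m _ => hmap m]
    have hrhs : ∑ m ∈ Finset.range (k+1), ((k+1).choose (m + 1)) • ((B.L t ^ m) t)
        = (∑ m ∈ Finset.range (k+1), (k.choose m) • ((B.L t ^ m) t))
          + ∑ m ∈ Finset.range (k+1), (k.choose (m+1)) • ((B.L t ^ m) t) := by
      rw [← Finset.sum_add_distrib]
      refine Finset.sum_congr rfl fun m _ => ?_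
      rw [Nat.choose_succ_succ, add_smul]
    rw [hrhs, Finset.sum_range_succ' (fun m => (k.choose m) • ((B.L t ^ m) t)),
      Finset.sum_range_succ (fun m => (k.choose (m+1)) • ((B.L t ^ m) t)),
      Nat.choose_succ_self]
    simp only [Nat.choose_zero_right, one_smul, pow_zero, zero_smul, add_zero]
    show t + _ + _ = _
    rw [AddMonoid.End.coe_one, id_eq]
    abel

end LeftBrace

namespace LeftBrace

variable {A : Type*} [AddCommGroup A] (B : LeftBrace A)

/-- `lam a` as an additive automorphism. -/
noncomputable def lamEquiv [Fintype A] (a : A) : AddAut A :=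
  AddEquiv.ofBijective (B.lam a)
    ((Finite.injective_iff_bijective).mp (B.lam_injective a))

@[simp] lemma lamEquiv_apply [Fintype A] (a b : A) : B.lamEquiv a b = B.lam a b := rfl

lemma lamEquiv_pow_apply [Fintype A] (a : A) (k : ℕ) : ∀ x : A,
    ((B.lamEquiv a) ^ k) x = ((B.lam a) ^ k) x := by
  induction k with
  | zero => intro x; rfl
  | succ k ih =>
    intro x
    rw [pow_succ, pow_succ]
    show ((B.lamEquiv a) ^ k) (B.lamEquiv a x) = ((B.lam a) ^ k) ((B.lam a) x)
    rw [ih]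
    rfl

/-- Key lemma: if `p • t = 0` then `p • (t * y) = 0`. -/
theorem star_ann [Fintype A] {p n : ℕ} (hp : p.Prime) (hpn : n + 1 < p)
    (hcard : Fintype.card A = p ^ n) (t : A) (ht : p • t = 0) (y : A) :
    p • B.star t y = 0 := by
  set N : AddMonoid.End A := B.L t with hNdef
  -- nilpotency
  have hφord : (B.lamEquiv t) ^ (p ^ n) = 1 := by
    refine AddEquiv.ext fun x => ?_
    rw [lamEquiv_pow_apply, ← B.lam_circPow, ← hcard, B.circPow_card, B.lam_zero]
    rfl
  have htoEnd : (B.lamEquiv t).toEnd = B.lam t := rfl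
  have hNn : N ^ n = 0 := by
    have := aux_nilpotent n p n hp hcard (B.lamEquiv t) hφord
    rw [htoEnd] at this
    have hl : B.lam t - 1 = N := by
      rw [lam, add_sub_cancel_left]
    rwa [hl] at this
  have hNk : ∀ k, n ≤ k → N ^ k = 0 := by
    intro k hk
    rw [show k = n + (k - n) by omega, pow_add, hNn, zero_mul]
  -- circPow t p = 0
  have hcp : B.circPow t p = 0 := by
    rw [circPow_eq_sum]
    refine Finset.sum_eq_zero fun m hm => ?_
    rcases lt_or_ge m n with hmn | hmn
    · -- p ∣ choose p (m+1)
      obtain ⟨c, hc⟩ := Nat.Prime.dvd_choose_self hp (Nat.succ_ne_zero m) (by omega)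
      rw [hc, mul_comm, mul_smul, ← map_nsmul, ht, map_zero, smul_zero]
    · rw [hNk m hmn]
      simp
  -- (1 + N) ^ p = 1
  have hone : ((1 : AddMonoid.End A) + N) ^ p = 1 := by
    have : B.lam t = 1 + N := rfl
    rw [← this, ← B.lam_circPow, hcp, B.lam_zero]
  -- binomial expansion
  have hbin : ∑ m ∈ Finset.range (p + 1), N ^ m * ((p.choose m : ℕ) : AddMonoid.End A) = 1 := by
    have hc := (Commute.one_right N).add_pow p
    rw [add_comm] at hone
    rw [hone] at hc
    symm
    rw [hc]
    refine Finset.sum_congr rfl fun m hm => ?_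
    rw [one_pow, mul_one]
  have hsum0 : ∑ m ∈ Finset.range p, N ^ (m + 1) * ((p.choose (m + 1) : ℕ) : AddMonoid.End A)
      = 0 := by
    have h := hbin
    rw [Finset.sum_range_succ'] at h
    simp only [pow_zero, Nat.choose_zero_right, Nat.cast_one, one_mul] at h
    exact (add_eq_right).mp h
  -- rewrite each term as (c m) * N^m * (p * N)
  set c : ℕ → ℕ := fun j => p.choose j / p with hcdef
  have hterm : ∀ m ∈ Finset.range p,
      N ^ (m + 1) * ((p.choose (m + 1) : ℕ) : AddMonoid.End A)
        = (((c (m + 1) : ℕ) : AddMonoid.End A) * N ^ m) * (((p : ℕ) : AddMonoid.End A) * N) := by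
    intro m hm
    rcases eq_or_lt_of_le (Nat.succ_le_of_lt (Finset.mem_range.mp hm)) with he | hlt
    · -- m + 1 = p : N ^ p = 0 and c p = choose p p / p = 1 / p = 0
      have hNp : N ^ (m + 1) = 0 := hNk _ (by omega)
      have hcp0 : c (m + 1) = 0 := by
        rw [hcdef]
        simp only []
        rw [show m + 1 = p from he, Nat.choose_self]
        exact Nat.div_eq_of_lt hp.one_lt
      rw [hNp, hcp0, zero_mul, Nat.cast_zero, zero_mul, zero_mul]
    · have hd : p ∣ p.choose (m + 1) :=
        Nat.Prime.dvd_choose_self hp (Nat.succ_ne_zero m) hlt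
      have hcm : p.choose (m + 1) = p * c (m + 1) := by
        rw [hcdef]
        exact (Nat.mul_div_cancel' hd).symm
      rw [hcm, Nat.cast_mul]
      calc N ^ (m+1) * (((p:ℕ):AddMonoid.End A) * ((c (m+1) :ℕ):AddMonoid.End A))
          = N ^ (m+1) * ((((p * c (m+1)) :ℕ):AddMonoid.End A)) := by rw [Nat.cast_mul]
        _ = (((p * c (m+1)) :ℕ):AddMonoid.End A) * N ^ (m+1) :=
            by exact (Nat.cast_commute (p * c (m+1)) (N ^ (m+1))).symm.eq
        _ = (p * c (m+1)) • N ^ (m+1) := (nsmul_eq_mul _ _).symm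
        _ = (c (m+1) * p) • (N ^ m * N) := by rw [mul_comm p, pow_succ]
        _ = (c (m+1) • N ^ m) * (p • N) := (smul_mul_smul_comm _ _ _ _).symm
        _ = (((c (m+1) :ℕ):AddMonoid.End A) * N ^ m) * (((p:ℕ):AddMonoid.End A) * N) := by
            rw [nsmul_eq_mul, nsmul_eq_mul]
  -- factor the sum
  have hWP : (∑ m ∈ Finset.range p, ((c (m+1) :ℕ):AddMonoid.End A) * N ^ m)
      * (((p:ℕ):AddMonoid.End A) * N) = 0 := by
    rw [Finset.sum_mul]
    rw [← Finset.sum_congr rfl hterm]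
    exact hsum0
  set W : AddMonoid.End A := ∑ m ∈ Finset.range p, ((c (m+1) :ℕ):AddMonoid.End A) * N ^ m
    with hWdef
  set V : AddMonoid.End A :=
    ∑ m ∈ Finset.range (p-1), ((c (m+2) :ℕ):AddMonoid.End A) * N ^ (m+1) with hVdef
  have hp1 : p - 1 + 1 = p := by omega
  have hW : W = V + 1 := by
    rw [hWdef, ← hp1, Finset.sum_range_succ' (fun m => ((c (m+1) :ℕ):AddMonoid.End A) * N ^ m)]
    have hc1 : c 1 = 1 := by
      rw [hcdef]
      simp only []
      rw [Nat.choose_one_right]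
      exact Nat.div_self hp.pos
    rw [hc1, pow_zero, Nat.cast_one, one_mul]
  have hV : IsNilpotent V := by
    refine Commute.isNilpotent_sum (fun i _ => ⟨n, ?_⟩) (fun i j _ _ => ?_)
    · rw [(Nat.cast_commute ((c (i+2)):ℕ) (N ^ (i+1))).mul_pow, ← pow_mul,
        Nat.succ_mul, pow_add, hNn, mul_zero, mul_zero]
    · refine Commute.mul_left (Nat.cast_commute _ _) ?_
      refine Commute.mul_right (Nat.cast_commute _ _).symm ?_
      exact (Commute.refl N).pow_pow _ _
  obtain ⟨u, hu⟩ := hV.isUnit_add_one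
  have hP : ((p:ℕ):AddMonoid.End A) * N = 0 := by
    have h1 : (V + 1) * (((p:ℕ):AddMonoid.End A) * N) = 0 := by rw [← hW]; exact hWP
    calc ((p:ℕ):AddMonoid.End A) * N
        = (↑u⁻¹ * ↑u) * (((p:ℕ):AddMonoid.End A) * N) := by
          rw [u.inv_mul, one_mul]
      _ = ↑u⁻¹ * ((V + 1) * (((p:ℕ):AddMonoid.End A) * N)) := by rw [mul_assoc, hu]
      _ = 0 := by rw [h1, mul_zero]
  have := congrArg (fun f : AddMonoid.End A => f y) hP
  simp only [AddMonoid.End.coe_mul, Function.comp_apply, AddMonoid.End.natCast_apply] at this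
  rw [← B.L_apply t y]
  exact this

end LeftBrace

namespace LeftBrace

variable {A : Type*} [AddCommGroup A] (B : LeftBrace A)

lemma star_eq (a b : A) : B.star a b = B.lam a b - b := by
  rw [lam_apply]
  unfold star
  abel

end LeftBrace


/-- Let A be a brace of cardinality p^n, p > n + 1 prime. If p²(a - a') = 0 then
p((pa) * y) = p((pa') * y) for every y. -/
theorem stmt7 {A : Type*} [AddCommGroup A] [Fintype A] (B : LeftBrace A) (p n : ℕ)
    (hp : p.Prime) (hpn : n + 1 < p) (hcard : Fintype.card A = p ^ n)
    (a a' : A) (h : p ^ 2 • (a - a') = 0) (y : A) :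
    p • B.star (p • a) y = p • B.star (p • a') y := by
  open LeftBrace in
  set x := p • a' with hx
  set z := p • a - p • a' with hz
  have hpz : p • z = 0 := by
    have h2 : p • z = p ^ 2 • (a - a') := by
      rw [hz, smul_sub, smul_sub, smul_smul, smul_smul, ← pow_two]
    rw [h2, h]
  set t := (B.lamEquiv x).symm z with htdef
  have hlt : B.lam x t = z := (B.lamEquiv x).apply_symm_apply z
  have hpt : p • t = 0 := by
    rw [htdef, ← map_nsmul, hpz, map_zero]
  have hxz : p • a = x + z := by rw [hx, hz]; abel
  have hsplit : B.star (x + z) y = B.star x y + B.lam x (B.star t y) := by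
    have h1 : x + z = B.circ x t := by rw [B.circ_eq_add_lam, hlt]
    rw [h1]
    show B.circ (B.circ x t) y - B.circ x t - y = _
    rw [B.circ_assoc, B.circ_eq_add_lam x (B.circ t y), B.circ_eq_add_lam x t,
      B.circ_eq_add_lam t y, map_add, B.star_eq x y, B.star_eq t y, map_sub]
    abel
  calc p • B.star (p • a) y = p • (B.star x y + B.lam x (B.star t y)) := by rw [hxz, hsplit]
    _ = p • B.star x y + B.lam x (p • B.star t y) := by rw [smul_add, map_nsmul]
    _ = p • B.star (p • a') y := by
        rw [B.star_ann hp hpn hcard t hpt y, map_zero, add_zero]
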